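/- Let G be a graph and k ≥ 1. An edge set F is an inclusionwise minimal union of k 2-star-packings covering all vertices if and only if F is an inclusionwise minimal matching-2k-cover. -/

import Mathlib

/-- `M` is a matching of `G`: a set of edges of `G` that are pairwise vertex-disjoint. -/
def IsMatching {V : Type*} (G : SimpleGraph V) (M : Finset (Sym2 V)) : Prop :=
  ↑M ⊆ G.edgeSet ∧ (M : Set (Sym2 V)).Pairwise fun e f => ∀ v : V, ¬(v ∈ e ∧ v ∈ f)

/-- A vertex `v` is covered by an edge set `F` if some edge of `F` is incident to it. -/
def Covers {V : Type*} (F : Finset (Sym2 V)) (v : V) : Prop := ∃ e ∈ F, v ∈ e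

instance {V : Type*} [DecidableEq V] (F : Finset (Sym2 V)) (v : V) : Decidable (Covers F v) :=
  inferInstanceAs (Decidable (∃ e ∈ F, v ∈ e))

/-- A stable (independent) set of vertices. -/
def IsStable {V : Type*} (G : SimpleGraph V) (S : Finset V) : Prop :=
  ∀ u ∈ S, ∀ v ∈ S, ¬ G.Adj u v

/-- The external neighborhood `N(S)`. -/
def nbr {V : Type*} [Fintype V] [DecidableEq V] (G : SimpleGraph V) [DecidableRel G.Adj]
    (S : Finset V) : Finset V :=
  Finset.univ.filter fun w => w ∉ S ∧ ∃ u ∈ S, G.Adj u w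

/-- degree of a vertex in an edge set -/
def degF {V : Type*} [DecidableEq V] (F : Finset (Sym2 V)) (v : V) : ℕ :=
  (F.filter fun e => v ∈ e).card

/-- `F` is a 2-star-packing: each component is a star with 1 or 2 edges.
Equivalently all degrees are at most 2 and no edge joins two vertices of degree 2. -/
def Is2StarPacking {V : Type*} [DecidableEq V] (G : SimpleGraph V) (F : Finset (Sym2 V)) : Prop :=
  ↑F ⊆ G.edgeSet ∧ (∀ v : V, degF F v ≤ 2) ∧
    ∀ e ∈ F, ∀ u v : V, e = s(u, v) → degF F u = 1 ∨ degF F v = 1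
/-- `F` is a matching-`k`-cover: the union of `k` matchings of `G` covering every vertex. -/
def IsMatchingKCover {V : Type*} [DecidableEq V] (G : SimpleGraph V)
    (F : Finset (Sym2 V)) (k : ℕ) : Prop :=
  (∃ M : Fin k → Finset (Sym2 V), (∀ i, IsMatching G (M i)) ∧ F = Finset.univ.sup M) ∧
    ∀ v : V, Covers F v

/-- `F` is the union of `k` 2-star-packings of `G` covering every vertex. -/
def IsUnionOfK2StarPackingsCovering {V : Type*} [DecidableEq V] (G : SimpleGraph V)
    (F : Finset (Sym2 V)) (k : ℕ) : Prop :=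
  (∃ H : Fin k → Finset (Sym2 V), (∀ i, Is2StarPacking G (H i)) ∧ F = Finset.univ.sup H) ∧
    ∀ v : V, Covers F v

section StarPackingAux

variable {V : Type*} [Fintype V] [DecidableEq V]

lemma degF_mono {F F' : Finset (Sym2 V)} (h : F' ⊆ F) (v : V) : degF F' v ≤ degF F v :=
  Finset.card_le_card (Finset.filter_subset_filter _ h)

lemma degF_one_unique {F : Finset (Sym2 V)} {e f : Sym2 V} {u : V} (he : e ∈ F) (hue : u ∈ e)
    (hf : f ∈ F) (huf : u ∈ f) (hdeg : degF F u = 1) : e = f := by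
  obtain ⟨g, hg⟩ := Finset.card_eq_one.mp hdeg
  have h1 : e ∈ F.filter (fun e => u ∈ e) := Finset.mem_filter.mpr ⟨he, hue⟩
  have h2 : f ∈ F.filter (fun e => u ∈ e) := Finset.mem_filter.mpr ⟨hf, huf⟩
  rw [hg, Finset.mem_singleton] at h1 h2
  rw [h1, h2]

lemma degF_pos {F : Finset (Sym2 V)} {e : Sym2 V} {u : V} (he : e ∈ F) (hue : u ∈ e) :
    1 ≤ degF F u :=
  Finset.card_pos.mpr ⟨e, Finset.mem_filter.mpr ⟨he, hue⟩⟩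

lemma degF_sub_one {F H : Finset (Sym2 V)} {e : Sym2 V} {u : V} (hHF : H ⊆ F) (he : e ∈ H)
    (hue : u ∈ e) (hdeg : degF F u = 1) : degF H u = 1 :=
  le_antisymm (hdeg ▸ degF_mono hHF u) (degF_pos he hue)

lemma two_le_degF {F : Finset (Sym2 V)} {e f : Sym2 V} {u : V} (he : e ∈ F) (hue : u ∈ e)
    (hf : f ∈ F) (huf : u ∈ f) (hne : e ≠ f) : 2 ≤ degF F u :=
  Finset.one_lt_card.mpr ⟨e, Finset.mem_filter.mpr ⟨he, hue⟩, f, Finset.mem_filter.mpr ⟨hf, huf⟩, hne⟩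

lemma exists_other_edge {F : Finset (Sym2 V)} {e : Sym2 V} {u : V} (hdeg : 2 ≤ degF F u) :
    ∃ f ∈ F, u ∈ f ∧ f ≠ e := by
  obtain ⟨a, ha, b, hb, hab⟩ := Finset.one_lt_card.mp hdeg
  rw [Finset.mem_filter] at ha hb
  rcases eq_or_ne a e with rfl | hne
  · exact ⟨b, hb.1, hb.2, fun h => hab h.symm⟩
  · exact ⟨a, ha.1, ha.2, hne⟩

lemma sym2_exists_eq (e : Sym2 V) : ∃ u v : V, e = s(u, v) :=
  Sym2.ind (f := fun e => ∃ u v : V, e = s(u, v)) (fun x y => ⟨x, y, rfl⟩) e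

/-- The key structural property: `F` is a subgraph covering all vertices, with max degree at
most `2k`, each edge having an endpoint of degree `1` (star forest). -/
def Nice (G : SimpleGraph V) (F : Finset (Sym2 V)) (k : ℕ) : Prop :=
  ↑F ⊆ G.edgeSet ∧ (∀ v : V, Covers F v) ∧ (∀ v : V, degF F v ≤ 2 * k) ∧
    ∀ e ∈ F, ∀ u v : V, e = s(u, v) → degF F u = 1 ∨ degF F v = 1

lemma nice_min {G : SimpleGraph V} {F : Finset (Sym2 V)} {k : ℕ} (hN : Nice G F k)
    {F' : Finset (Sym2 V)} (hss : F' ⊂ F) : ∃ u : V, ¬ Covers F' u := by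
  obtain ⟨e, heF, heF'⟩ := Finset.exists_of_ssubset hss
  obtain ⟨u, v, rfl⟩ := sym2_exists_eq e
  have hpend := hN.2.2.2 _ heF u v rfl
  have key : ∀ w : V, w ∈ s(u, v) → degF F w = 1 → ¬ Covers F' w := by
    intro w hw hdeg ⟨f, hf, hwf⟩
    exact heF' ((degF_one_unique heF hw (hss.1 hf) hwf hdeg) ▸ hf)
  rcases hpend with h1 | h1
  · exact ⟨u, key u (Sym2.mem_mk_left u v) h1⟩
  · exact ⟨v, key v (Sym2.mem_mk_right u v) h1⟩

/-- the canonical center of an edge: an endpoint of degree at least 2 if one exists -/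
noncomputable def ctr (F : Finset (Sym2 V)) (e : Sym2 V) : V :=
  if h : ∃ w, w ∈ e ∧ 2 ≤ degF F w then h.choose else (Quot.out e).1

lemma ctr_mem (F : Finset (Sym2 V)) (e : Sym2 V) : ctr F e ∈ e := by
  unfold ctr
  split
  · next h => exact h.choose_spec.1
  · exact Sym2.out_fst_mem e

lemma ctr_eq {G : SimpleGraph V} {F : Finset (Sym2 V)} {k : ℕ} (hN : Nice G F k)
    {e : Sym2 V} {u : V} (he : e ∈ F) (hue : u ∈ e) (hdeg : 2 ≤ degF F u) : ctr F e = u := by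
  have h : ∃ w, w ∈ e ∧ 2 ≤ degF F w := ⟨u, hue, hdeg⟩
  rw [ctr, dif_pos h]
  obtain ⟨hwe, hwdeg⟩ := h.choose_spec
  by_contra hne
  have heq : e = s(h.choose, u) := (Sym2.mem_and_mem_iff hne).mp ⟨hwe, hue⟩
  rcases hN.2.2.2 _ he _ _ heq with h1 | h1 <;> omega

/-- index of an edge among the edges incident to `v` -/
noncomputable def eidx (F : Finset (Sym2 V)) (v : V) (e : Sym2 V) : ℕ :=
  (F.filter (fun e => v ∈ e)).toList.idxOf e

lemma eidx_lt {F : Finset (Sym2 V)} {v : V} {e : Sym2 V} (he : e ∈ F) (hv : v ∈ e) :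
    eidx F v e < degF F v := by
  have hmem : e ∈ (F.filter (fun e => v ∈ e)).toList :=
    Finset.mem_toList.mpr (Finset.mem_filter.mpr ⟨he, hv⟩)
  simpa [eidx, degF, Finset.length_toList] using List.idxOf_lt_length_iff.mpr hmem

lemma eidx_inj {F : Finset (Sym2 V)} {v : V} {e f : Sym2 V} (he : e ∈ F) (hve : v ∈ e)
    (hf : f ∈ F) (hvf : v ∈ f) (h : eidx F v e = eidx F v f) : e = f := by
  have hme : e ∈ (F.filter (fun e => v ∈ e)).toList :=
    Finset.mem_toList.mpr (Finset.mem_filter.mpr ⟨he, hve⟩)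
  have hmf : f ∈ (F.filter (fun e => v ∈ e)).toList :=
    Finset.mem_toList.mpr (Finset.mem_filter.mpr ⟨hf, hvf⟩)
  exact (List.idxOf_inj hme).mp h

end StarPackingAux
section StarPackingMain

variable {V : Type*} [Fintype V] [DecidableEq V]

set_option linter.unusedSectionVars false

lemma nice_exists_packings {G : SimpleGraph V} {F : Finset (Sym2 V)} {k : ℕ} (hk : 1 ≤ k)
    (hN : Nice G F k) :
    ∃ H : Fin k → Finset (Sym2 V), (∀ i, Is2StarPacking G (H i)) ∧ F = Finset.univ.sup H := by
  obtain ⟨hsub, hcov, hdeg, hpend⟩ := hN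
  have hbound : ∀ e ∈ F, eidx F (ctr F e) e < 2 * k := fun e he =>
    lt_of_lt_of_le (eidx_lt he (ctr_mem F e)) (hdeg _)
  set col : Sym2 V → Fin k := fun e =>
    if h : e ∈ F then ⟨eidx F (ctr F e) e / 2, by have := hbound e h; omega⟩ else ⟨0, hk⟩ with hcol
  refine ⟨fun i => F.filter (fun e => col e = i), fun i => ?_, ?_⟩
  · refine ⟨subset_trans (Finset.coe_subset.mpr (Finset.filter_subset _ _)) hsub, ?_, ?_⟩
    · intro v
      rcases le_or_gt (degF F v) 1 with hv | hv
      · exact le_trans (degF_mono (Finset.filter_subset _ _) v) (le_trans hv one_le_two)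
      · -- every edge at v has center v and index in {2i, 2i+1}
        have hmaps : ∀ e ∈ (F.filter (fun e => col e = i)).filter (fun e => v ∈ e),
            eidx F v e ∈ ({2 * i.val, 2 * i.val + 1} : Finset ℕ) := by
          intro e he
          rw [Finset.mem_filter, Finset.mem_filter] at he
          obtain ⟨⟨heF, hcole⟩, hve⟩ := he
          have hctr : ctr F e = v := ctr_eq ⟨hsub, hcov, hdeg, hpend⟩ heF hve hv
          have : eidx F (ctr F e) e / 2 = i.val := by
            have h' := congrArg Fin.val hcole
            rw [hcol] at h'
            simpa [dif_pos heF] using h'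
          rw [hctr] at this
          simp only [Finset.mem_insert, Finset.mem_singleton]
          omega
        have hinj : Set.InjOn (eidx F v)
            ↑((F.filter (fun e => col e = i)).filter (fun e => v ∈ e)) := by
          intro e he f hf hef
          simp only [Finset.coe_filter, Finset.mem_filter, Set.mem_setOf_eq] at he hf
          exact eidx_inj he.1.1 he.2 hf.1.1 hf.2 hef
        calc degF (F.filter (fun e => col e = i)) v
            ≤ ({2 * i.val, 2 * i.val + 1} : Finset ℕ).card :=
              Finset.card_le_card_of_injOn _ hmaps hinj
          _ ≤ 2 := (Finset.card_insert_le _ _).trans (by simp)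
    · intro e he u w huw
      have heF : e ∈ F := (Finset.filter_subset _ _) he
      rcases hpend e heF u w huw with h1 | h1
      · exact Or.inl (degF_sub_one (Finset.filter_subset _ _) he
          (huw ▸ Sym2.mem_mk_left u w) h1)
      · exact Or.inr (degF_sub_one (Finset.filter_subset _ _) he
          (huw ▸ Sym2.mem_mk_right u w) h1)
  · ext e
    simp only [Finset.mem_sup, Finset.mem_filter, Finset.mem_univ, true_and]
    exact ⟨fun he => ⟨col e, he, rfl⟩, fun ⟨i, he, _⟩ => he⟩

lemma nice_exists_matchings {G : SimpleGraph V} {F : Finset (Sym2 V)} {k : ℕ} (hk : 1 ≤ k)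
    (hN : Nice G F k) :
    ∃ M : Fin (2 * k) → Finset (Sym2 V), (∀ i, IsMatching G (M i)) ∧ F = Finset.univ.sup M := by
  obtain ⟨hsub, hcov, hdeg, hpend⟩ := hN
  have hbound : ∀ e ∈ F, eidx F (ctr F e) e < 2 * k := fun e he =>
    lt_of_lt_of_le (eidx_lt he (ctr_mem F e)) (hdeg _)
  set col : Sym2 V → Fin (2 * k) := fun e =>
    if h : e ∈ F then ⟨eidx F (ctr F e) e, hbound e h⟩ else ⟨0, by omega⟩ with hcol
  refine ⟨fun i => F.filter (fun e => col e = i), fun i => ?_, ?_⟩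
  · refine ⟨subset_trans (Finset.coe_subset.mpr (Finset.filter_subset _ _)) hsub, ?_⟩
    intro e he f hf hef v ⟨hve, hvf⟩
    simp only [Finset.coe_filter, Set.mem_setOf_eq] at he hf
    have hv2 : 2 ≤ degF F v := two_le_degF he.1 hve hf.1 hvf hef
    have hce : ctr F e = v := ctr_eq ⟨hsub, hcov, hdeg, hpend⟩ he.1 hve hv2
    have hcf : ctr F f = v := ctr_eq ⟨hsub, hcov, hdeg, hpend⟩ hf.1 hvf hv2
    have h1 : col e = col f := he.2.trans hf.2.symm
    have h2 : eidx F (ctr F e) e = eidx F (ctr F f) f := by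
      have h' := congrArg Fin.val h1
      rw [hcol] at h'
      simpa [dif_pos he.1, dif_pos hf.1] using h'
    rw [hce, hcf] at h2
    exact hef (eidx_inj he.1 hve hf.1 hvf h2)
  · ext e
    simp only [Finset.mem_sup, Finset.mem_filter, Finset.mem_univ, true_and]
    exact ⟨fun he => ⟨col e, he, rfl⟩, fun ⟨i, he, _⟩ => he⟩

end StarPackingMain
section StarPackingFinal

variable {V : Type*} [Fintype V] [DecidableEq V]

set_option linter.unusedSectionVars false

lemma erase_packing {G : SimpleGraph V} {H : Finset (Sym2 V)} (hH : Is2StarPacking G H)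
    (e : Sym2 V) : Is2StarPacking G (H.erase e) := by
  obtain ⟨hsub, hdeg, hpend⟩ := hH
  refine ⟨subset_trans (Finset.coe_subset.mpr (Finset.erase_subset _ _)) hsub,
    fun v => le_trans (degF_mono (Finset.erase_subset _ _) v) (hdeg v), ?_⟩
  intro f hf u w huw
  have hfH : f ∈ H := Finset.mem_of_mem_erase hf
  rcases hpend f hfH u w huw with h1 | h1
  · exact Or.inl (degF_sub_one (Finset.erase_subset _ _) hf (huw ▸ Sym2.mem_mk_left u w) h1)
  · exact Or.inr (degF_sub_one (Finset.erase_subset _ _) hf (huw ▸ Sym2.mem_mk_right u w) h1)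

lemma erase_matching {G : SimpleGraph V} {M : Finset (Sym2 V)} (hM : IsMatching G M)
    (e : Sym2 V) : IsMatching G (M.erase e) :=
  ⟨subset_trans (Finset.coe_subset.mpr (Finset.erase_subset _ _)) hM.1,
    hM.2.mono (Finset.coe_subset.mpr (Finset.erase_subset _ _))⟩

lemma sup_erase {k : ℕ} (H : Fin k → Finset (Sym2 V)) (e : Sym2 V) :
    Finset.univ.sup (fun i => (H i).erase e) = (Finset.univ.sup H).erase e := by
  ext f
  simp only [Finset.mem_sup, Finset.mem_erase, Finset.mem_univ, true_and]
  tauto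

lemma covers_erase {F : Finset (Sym2 V)} {u v : V} (he : s(u, v) ∈ F)
    (hu : 2 ≤ degF F u) (hv : 2 ≤ degF F v) (hcov : ∀ w, Covers F w) (w : V) :
    Covers (F.erase s(u, v)) w := by
  obtain ⟨f, hf, hwf⟩ := hcov w
  rcases eq_or_ne f s(u, v) with rfl | hne
  · rcases Sym2.mem_iff.mp hwf with h | h
    · obtain ⟨g, hg, hwg, hgne⟩ := exists_other_edge (e := s(u, v)) hu
      exact ⟨g, Finset.mem_erase.mpr ⟨hgne, hg⟩, h ▸ hwg⟩
    · obtain ⟨g, hg, hwg, hgne⟩ := exists_other_edge (e := s(u, v)) hv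
      exact ⟨g, Finset.mem_erase.mpr ⟨hgne, hg⟩, h ▸ hwg⟩
  · exact ⟨f, Finset.mem_erase.mpr ⟨hne, hf⟩, hwf⟩

lemma union_min_nice {G : SimpleGraph V} {F : Finset (Sym2 V)} {k : ℕ}
    (h1 : IsUnionOfK2StarPackingsCovering G F k)
    (h2 : ∀ F' ⊂ F, ¬ IsUnionOfK2StarPackingsCovering G F' k) : Nice G F k := by
  obtain ⟨⟨H, hHp, hFsup⟩, hcov⟩ := h1
  have hsub : ↑F ⊆ G.edgeSet := by
    intro e he
    rw [hFsup] at he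
    obtain ⟨i, _, hei⟩ := Finset.mem_sup.mp he
    exact (hHp i).1 hei
  have hdeg : ∀ v, degF F v ≤ 2 * k := by
    intro v
    have h3 : degF F v ≤ ∑ i : Fin k, degF (H i) v := by
      rw [degF, hFsup, Finset.sup_eq_biUnion, Finset.filter_biUnion]
      exact Finset.card_biUnion_le
    refine h3.trans (le_trans (Finset.sum_le_card_nsmul _ _ 2 fun i _ => (hHp i).2.1 v) ?_)
    simp [mul_comm]
  refine ⟨hsub, hcov, hdeg, ?_⟩
  intro e he u v huv
  by_contra hcon
  push_neg at hcon
  obtain ⟨hu1, hv1⟩ := hcon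
  rw [huv] at he
  have hu2 : 2 ≤ degF F u := by
    have := degF_pos he (Sym2.mem_mk_left u v); omega
  have hv2 : 2 ≤ degF F v := by
    have := degF_pos he (Sym2.mem_mk_right u v); omega
  refine h2 (F.erase s(u, v)) (Finset.erase_ssubset he) ⟨⟨fun i => (H i).erase s(u, v),
    fun i => erase_packing (hHp i) _, by rw [sup_erase, hFsup]⟩,
    covers_erase he hu2 hv2 hcov⟩

lemma cover_min_nice {G : SimpleGraph V} {F : Finset (Sym2 V)} {k : ℕ}
    (h1 : IsMatchingKCover G F (2 * k))
    (h2 : ∀ F' ⊂ F, ¬ IsMatchingKCover G F' (2 * k)) : Nice G F k := by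
  obtain ⟨⟨M, hMp, hFsup⟩, hcov⟩ := h1
  have hsub : ↑F ⊆ G.edgeSet := by
    intro e he
    rw [hFsup] at he
    obtain ⟨i, _, hei⟩ := Finset.mem_sup.mp he
    exact (hMp i).1 hei
  have hdegM : ∀ i v, degF (M i) v ≤ 1 := by
    intro i v
    refine Finset.card_le_one.mpr fun a ha b hb => ?_
    rw [Finset.mem_filter] at ha hb
    by_contra hne
    exact (hMp i).2 ha.1 hb.1 hne v ⟨ha.2, hb.2⟩
  have hdeg : ∀ v, degF F v ≤ 2 * k := by
    intro v
    have h3 : degF F v ≤ ∑ i : Fin (2 * k), degF (M i) v := by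
      rw [degF, hFsup, Finset.sup_eq_biUnion, Finset.filter_biUnion]
      exact Finset.card_biUnion_le
    refine h3.trans (le_trans (Finset.sum_le_card_nsmul _ _ 1 fun i _ => hdegM i v) ?_)
    simp
  refine ⟨hsub, hcov, hdeg, ?_⟩
  intro e he u v huv
  by_contra hcon
  push_neg at hcon
  obtain ⟨hu1, hv1⟩ := hcon
  rw [huv] at he
  have hu2 : 2 ≤ degF F u := by
    have := degF_pos he (Sym2.mem_mk_left u v); omega
  have hv2 : 2 ≤ degF F v := by
    have := degF_pos he (Sym2.mem_mk_right u v); omega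
  refine h2 (F.erase s(u, v)) (Finset.erase_ssubset he) ⟨⟨fun i => (M i).erase s(u, v),
    fun i => erase_matching (hMp i) _, by rw [sup_erase, hFsup]⟩,
    covers_erase he hu2 hv2 hcov⟩

end StarPackingFinal

theorem stmt_15 {V : Type*} [Fintype V] [DecidableEq V] (G : SimpleGraph V)
    (k : ℕ) (hk : 1 ≤ k) (F : Finset (Sym2 V)) :
    (IsUnionOfK2StarPackingsCovering G F k ∧
        ∀ F' ⊂ F, ¬ IsUnionOfK2StarPackingsCovering G F' k) ↔
      (IsMatchingKCover G F (2 * k) ∧ ∀ F' ⊂ F, ¬ IsMatchingKCover G F' (2 * k)) := by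
  constructor
  · rintro ⟨h1, h2⟩
    have hN := union_min_nice h1 h2
    refine ⟨⟨nice_exists_matchings hk hN, hN.2.1⟩, fun F' hss hcon => ?_⟩
    obtain ⟨u, hu⟩ := nice_min hN hss
    exact hu (hcon.2 u)
  · rintro ⟨h1, h2⟩
    have hN := cover_min_nice h1 h2
    refine ⟨⟨nice_exists_packings hk hN, hN.2.1⟩, fun F' hss hcon => ?_⟩
    obtain ⟨u, hu⟩ := nice_min hN hss
    exact hu (hcon.2 u)
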